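/- Let r₁, r₂, r₃, r₄ be a solution of the four-body system whose initial data satisfy ‖p₁₃(0)‖ = mω‖r₁₃(0)‖ and r₁₃(0) · p₁₃(0) = 0. Then the relative distance ‖r₁₃(t)‖ is constant in time: ‖r₁₃(t)‖ = ‖r₁₃(0)‖ for all t ∈ ℝ (the pair 1,3 executes a rigid two-body choreography). -/

import Mathlib

noncomputable section

/-- The Euclidean plane. -/
abbrev Plane : Type := EuclideanSpace ℝ (Fin 2)

/-- A solution of the planar four-body system with pairwise quadratic potential
`V = (mω²/4)(2‖r₁−r₂‖² + 2‖r₂−r₃‖² + 2‖r₃−r₄‖² + 2‖r₁−r₄‖² − ‖r₁−r₃‖² − ‖r₂−r₄‖²)`: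
four twice differentiable curves satisfying Newton's equations
`rᵢ'' = −ω²((rᵢ − r_{i+1}) + (rᵢ − r_{i−1}) − ½(rᵢ − r_{i+2}))` (indices mod 4). -/
def IsFourBodySolution (ω : ℝ) (r₁ r₂ r₃ r₄ : ℝ → Plane) : Prop :=
  (Differentiable ℝ r₁ ∧ Differentiable ℝ (deriv r₁)) ∧
  (Differentiable ℝ r₂ ∧ Differentiable ℝ (deriv r₂)) ∧
  (Differentiable ℝ r₃ ∧ Differentiable ℝ (deriv r₃)) ∧
  (Differentiable ℝ r₄ ∧ Differentiable ℝ (deriv r₄)) ∧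
  (∀ t : ℝ, deriv (deriv r₁) t =
    (-(ω ^ 2)) • ((r₁ t - r₂ t) + (r₁ t - r₄ t) - (1 / 2 : ℝ) • (r₁ t - r₃ t))) ∧
  (∀ t : ℝ, deriv (deriv r₂) t =
    (-(ω ^ 2)) • ((r₂ t - r₃ t) + (r₂ t - r₁ t) - (1 / 2 : ℝ) • (r₂ t - r₄ t))) ∧
  (∀ t : ℝ, deriv (deriv r₃) t =
    (-(ω ^ 2)) • ((r₃ t - r₄ t) + (r₃ t - r₂ t) - (1 / 2 : ℝ) • (r₃ t - r₁ t))) ∧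
  (∀ t : ℝ, deriv (deriv r₄) t =
    (-(ω ^ 2)) • ((r₄ t - r₁ t) + (r₄ t - r₃ t) - (1 / 2 : ℝ) • (r₄ t - r₂ t)))

/-- If the initial data satisfy `‖p₁₃(0)‖ = mω‖r₁₃(0)‖` and
`r₁₃(0) ⊥ p₁₃(0)`, then the relative distance `‖r₁₃(t)‖` is constant in time. -/
theorem rigid_pair_13 (m ω : ℝ) (hm : 0 < m) (hω : 0 < ω)
    (r₁ r₂ r₃ r₄ : ℝ → Plane)
    (hsol : IsFourBodySolution ω r₁ r₂ r₃ r₄)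
    (hmag : ‖m • deriv r₁ 0 - m • deriv r₃ 0‖ = m * ω * ‖r₁ 0 - r₃ 0‖)
    (hperp : (inner ℝ (r₁ 0 - r₃ 0) (m • deriv r₁ 0 - m • deriv r₃ 0) : ℝ) = 0) :
    ∀ t : ℝ, ‖r₁ t - r₃ t‖ = ‖r₁ 0 - r₃ 0‖ := by
  obtain ⟨⟨h1d, h1d2⟩, ⟨h2d, h2d2⟩, ⟨h3d, h3d2⟩, ⟨h4d, h4d2⟩, e1, e2, e3, e4⟩ := hsol
  set u : ℝ → Plane := fun t => r₁ t - r₃ t with hu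
  set v : ℝ → Plane := fun t => deriv r₁ t - deriv r₃ t with hv
  have hud : ∀ t, HasDerivAt u (v t) t := fun t =>
    ((h1d t).hasDerivAt).sub ((h3d t).hasDerivAt)
  have hvd : ∀ t, HasDerivAt v ((-(ω ^ 2)) • u t) t := by
    intro t
    have h := ((h1d2 t).hasDerivAt).sub ((h3d2 t).hasDerivAt)
    have he : deriv (deriv r₁) t - deriv (deriv r₃) t = (-(ω ^ 2)) • u t := by
      rw [e1 t, e3 t]; simp only [hu]; module
    rwa [he] at h
  -- key scalar functions
  set n : ℝ → ℝ := fun t => (inner ℝ (u t) (u t) : ℝ) with hn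
  set c : ℝ → ℝ := fun t => (inner ℝ (u t) (v t) : ℝ) with hc
  set k : ℝ → ℝ := fun t => (inner ℝ (v t) (v t) : ℝ) with hk
  have hnd : ∀ t, HasDerivAt n (2 * c t) t := by
    intro t
    have h := HasDerivAt.inner ℝ (hud t) (hud t)
    have he : (inner ℝ (u t) (v t) : ℝ) + inner ℝ (v t) (u t) = 2 * c t := by
      simp only [hc, real_inner_comm (v t) (u t)]; ring
    rwa [he] at h
  have hcd : ∀ t, HasDerivAt c (k t - ω ^ 2 * n t) t := by
    intro t
    have h := HasDerivAt.inner ℝ (hud t) (hvd t)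
    have he : (inner ℝ (u t) ((-(ω ^ 2)) • u t) : ℝ) + inner ℝ (v t) (v t) = k t - ω ^ 2 * n t := by
      simp only [hk, hn, real_inner_smul_right]; ring
    rwa [he] at h
  have hkd : ∀ t, HasDerivAt k (-(4 * ω ^ 2) * c t / 2) t := by
    intro t
    have h := HasDerivAt.inner ℝ (hvd t) (hvd t)
    have he : (inner ℝ (v t) ((-(ω ^ 2)) • u t) : ℝ) + inner ℝ ((-(ω ^ 2)) • u t) (v t)
        = -(4 * ω ^ 2) * c t / 2 := by
      simp only [hc, real_inner_smul_right, real_inner_smul_left,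
        real_inner_comm (v t) (u t)]; ring
    rwa [he] at h
  set Q : ℝ → ℝ := fun t => (k t - ω ^ 2 * n t) ^ 2 + 4 * ω ^ 2 * (c t) ^ 2 with hQ
  have hQd : ∀ t, HasDerivAt Q 0 t := by
    intro t
    have h := (((hkd t).sub ((hnd t).const_mul (ω ^ 2))).pow 2).add
      ((((hcd t).pow 2)).const_mul (4 * ω ^ 2))
    have he : (2 : ℕ) * (k t - ω ^ 2 * n t) ^ (2 - 1) * (-(4 * ω ^ 2) * c t / 2 - ω ^ 2 * (2 * c t))
        + 4 * ω ^ 2 * ((2 : ℕ) * c t ^ (2 - 1) * (k t - ω ^ 2 * n t)) = 0 := by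
      push_cast; ring
    simp only [Pi.sub_apply] at h
    rwa [he] at h
  have hQconst : ∀ t, Q t = Q 0 :=
    fun t => is_const_of_deriv_eq_zero (fun s => (hQd s).differentiableAt)
      (fun s => (hQd s).deriv) t 0
  have hv0 : ‖v 0‖ = ω * ‖r₁ 0 - r₃ 0‖ := by
    have h2 : ‖m • deriv r₁ 0 - m • deriv r₃ 0‖ = m * ‖v 0‖ := by
      rw [← smul_sub, norm_smul, Real.norm_eq_abs, abs_of_pos hm]
    rw [h2, mul_assoc] at hmag
    exact mul_left_cancel₀ hm.ne' hmag
  have hE10 : k 0 - ω ^ 2 * n 0 = 0 := by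
    simp only [hk, hn, hu, hv, real_inner_self_eq_norm_sq]
    have : ‖deriv r₁ 0 - deriv r₃ 0‖ = ω * ‖r₁ 0 - r₃ 0‖ := hv0
    rw [this]; ring
  have hc0 : c 0 = 0 := by
    have h2 : (inner ℝ (r₁ 0 - r₃ 0) (m • deriv r₁ 0 - m • deriv r₃ 0) : ℝ)
        = m * inner ℝ (r₁ 0 - r₃ 0) (deriv r₁ 0 - deriv r₃ 0) := by
      rw [← smul_sub, real_inner_smul_right]
    rw [h2] at hperp
    have h3 := (mul_eq_zero.mp hperp).resolve_left hm.ne'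
    simpa [hc, hu, hv] using h3
  have hQ0 : Q 0 = 0 := by simp [hQ, hE10, hc0]
  have hcz : ∀ t, c t = 0 := by
    intro t
    have h := hQconst t
    rw [hQ0] at h
    simp only [hQ] at h
    have h4 : (0:ℝ) < 4 * ω ^ 2 := by positivity
    have hcsq : c t ^ 2 = 0 := by
      nlinarith [sq_nonneg (k t - ω ^ 2 * n t), sq_nonneg (c t)]
    exact pow_eq_zero_iff two_ne_zero |>.mp hcsq
  have hnconst : ∀ t, n t = n 0 := by
    have hd : ∀ s, HasDerivAt n 0 s := by
      intro s; have h := hnd s; rwa [hcz s, mul_zero] at h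
    exact fun t => is_const_of_deriv_eq_zero (fun s => (hd s).differentiableAt)
      (fun s => (hd s).deriv) t 0
  intro t
  have hfin := hnconst t
  simp only [hn, hu, real_inner_self_eq_norm_sq] at hfin
  have h1 : (0:ℝ) ≤ ‖r₁ t - r₃ t‖ := norm_nonneg _
  have h2 : (0:ℝ) ≤ ‖r₁ 0 - r₃ 0‖ := norm_nonneg _
  nlinarith [hfin]
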